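/- Subject reduction for null assignment: if ρ,h,A ⊨ (Γ,Δ,Θ) then ρ[x ↦ null], h, A ⊨ (Γ[x ↦ ⊥], Δ, Θ). -/

import Mathlib

namespace SecureClones

abbrev Var := ℕ
abbrev Field := ℕ
abbrev Loc := ℕ
abbrev PolId := ℕ
abbrev Node := ℕ

/-- Values: locations or null. -/
inductive Val where
  | loc : Loc → Val
  | null : Val
deriving DecidableEq

abbrev Obj := Field → Val
abbrev Heap := Loc → Option Obj
abbrev Env := Var → Val

/-- An access path: a root variable followed by a sequence of fields. -/
structure Path where
  root : Var
  fields : List Field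
deriving DecidableEq

/-- Evaluation of a sequence of field dereferences from a value. -/
def evalFields (h : Heap) : Val → List Field → Option Val
  | v, [] => some v
  | Val.loc l, f :: fs =>
      match h l with
      | some o => evalFields h (o f) fs
      | none => none
  | Val.null, _ :: _ => none

/-- Concrete path evaluation ⟨ρ,h⟩π ⇓ v. -/
def EvalPath (ρ : Env) (h : Heap) (π : Path) (v : Val) : Prop :=
  evalFields h (ρ π.root) π.fields = some v

/-- Reachability in a heap: `Reach h v w` iff `w` is reachable from `v`
by a (possibly empty) sequence of field dereferences. -/
inductive Reach (h : Heap) : Val → Val → Prop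
  | refl (v) : Reach h v v
  | step {v : Val} {l : Loc} {o : Obj} (f : Field) :
      Reach h v (Val.loc l) → h l = some o → Reach h v (o f)

/-- A copy policy: a set of (policy identifier, deep field) pairs. -/
abbrev Pol := Set (PolId × Field)

/-- A field sequence follows only deep fields of a policy (w.r.t. policy map `Pm`). -/
inductive FieldsSat (Pm : PolId → Pol) : Pol → List Field → Prop
  | nil (τ) : FieldsSat Pm τ []
  | cons {τ : Pol} {fs : List Field} (X : PolId) (f : Field) :
      (X, f) ∈ τ → FieldsSat Pm (Pm X) fs → FieldsSat Pm τ (f :: fs)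

/-- ⊢ π : τ : the access path follows only deep fields of τ. -/
def PathSat (Pm : PolId → Pol) (π : Path) (τ : Pol) : Prop :=
  FieldsSat Pm τ π.fields

/-- Policy semantics ρ,h,x ⊨ τ. -/
def PolSem (Pm : PolId → Pol) (ρ : Env) (h : Heap) (x : Var) (τ : Pol) : Prop :=
  ∀ (π π' : Path) (l l' : Loc),
    π.root = x → π'.root ≠ x →
    PathSat Pm π τ →
    EvalPath ρ h π (Val.loc l) → EvalPath ρ h π' (Val.loc l') →
    l ≠ l'

/-- Base types of the type-and-effect system. -/
inductive BaseType where
  | node : Node → BaseType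
  | bot
  | topOut
  | top
deriving DecidableEq

abbrev Graph := Node → Option (Field → BaseType)

/-- A type (Γ,Δ,Θ). -/
structure Ty where
  Γ : Var → BaseType
  Δ : Graph
  Θ : Set Node

/-- Abstract evaluation of a field sequence from a base type, with ⊤, ⊤out as sinks. -/
def aevalFields (Δ : Graph) : BaseType → List Field → Option BaseType
  | t, [] => some t
  | BaseType.node n, f :: fs =>
      match Δ n with
      | some e => aevalFields Δ (e f) fs
      | none => none
  | BaseType.top, _ :: _ => some BaseType.top
  | BaseType.topOut, _ :: _ => some BaseType.topOut
  | BaseType.bot, _ :: _ => none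

/-- Abstract path evaluation [Γ,Δ]π ⇓ t. -/
def AEval (Γ : Var → BaseType) (Δ : Graph) (π : Path) (t : BaseType) : Prop :=
  aevalFields Δ (Γ π.root) π.fields = some t

/-- Auxiliary type interpretation [[v : t]]. -/
inductive AuxInterp (ρ : Env) (h : Heap) (A : Set Loc) (Γ : Var → BaseType) (Δ : Graph) :
    Val → BaseType → Prop
  | null (t) : AuxInterp ρ h A Γ Δ Val.null t
  | top (v) : AuxInterp ρ h A Γ Δ v BaseType.top
  | topOut (l : Loc) :
      (∀ l' : Loc, Reach h (Val.loc l) (Val.loc l') → l' ∉ A) →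
      AuxInterp ρ h A Γ Δ (Val.loc l) BaseType.topOut
  | node (l : Loc) (n : Node) :
      l ∈ A → (Δ n).isSome →
      (∀ π, EvalPath ρ h π (Val.loc l) → AEval Γ Δ π (BaseType.node n)) →
      AuxInterp ρ h A Γ Δ (Val.loc l) (BaseType.node n)

/-- Main type interpretation ρ,h,A ⊨ (Γ,Δ,Θ). -/
structure Interp (ρ : Env) (h : Heap) (A : Set Loc) (T : Ty) : Prop where
  paths : ∀ (π : Path) (t : BaseType) (v : Val),
    AEval T.Γ T.Δ π t → EvalPath ρ h π v → AuxInterp ρ h A T.Γ T.Δ v t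
  strong : ∀ n ∈ T.Θ, ∀ (π π' : Path) (l l' : Loc),
    AEval T.Γ T.Δ π (BaseType.node n) → AEval T.Γ T.Δ π' (BaseType.node n) →
    EvalPath ρ h π (Val.loc l) → EvalPath ρ h π' (Val.loc l') → l = l'

/-- Value sub-typing t ≤_σ t' (σ : Node → Option Node, none standing for ⊤). -/
inductive VSub (σ : Node → Option Node) : BaseType → BaseType → Prop
  | bot (t) : VSub σ BaseType.bot t
  | top {t : BaseType} : (∀ n, t ≠ BaseType.node n) → VSub σ t BaseType.top
  | topOut : VSub σ BaseType.topOut BaseType.topOut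
  | node {n n' : Node} : σ n = some n' → VSub σ (BaseType.node n) (BaseType.node n')
  | nodeTop {n : Node} : σ n = none → VSub σ (BaseType.node n) BaseType.top

/-- T₁ ⊑ T₂ via the fusion map σ. -/
structure SubtypeVia (T₁ T₂ : Ty) (σ : Node → Option Node) : Prop where
  st1 : ∀ n n', (T₁.Δ n).isSome → σ n = some n' → (T₂.Δ n').isSome
  st2 : ∀ (t₁ : BaseType) (π : Path), AEval T₁.Γ T₁.Δ π t₁ →
      ∃ t₂, VSub σ t₁ t₂ ∧ AEval T₂.Γ T₂.Δ π t₂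
  st3 : ∀ n₂ ∈ T₂.Θ, ∃ n₁ ∈ T₁.Θ,
      ∀ n, ((T₁.Δ n).isSome ∧ σ n = some n₂) ↔ n = n₁

/-- The sub-typing relation T₁ ⊑ T₂. -/
def TySub (T₁ T₂ : Ty) : Prop := ∃ σ, SubtypeVia T₁ T₂ σ

-- Successor base type of a policy node for field f: the node of the policy
-- governing f if f is deep, and ⊤ otherwise.
open Classical in
noncomputable def polEdge (τ : Pol) (f : Field) : BaseType :=
  if h : ∃ X, (X, f) ∈ τ then BaseType.node (h.choose + 1) else BaseType.top

/-- The graph part of Φ(τ): node 0 is the unfolded root n_τ, node X+1 is the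
node n'_X of policy identifier X. -/
noncomputable def PhiGraph (Pm : PolId → Pol) (τ : Pol) : Graph :=
  fun n =>
    match n with
    | 0 => some (polEdge τ)
    | m + 1 => some (polEdge (Pm m))

/-- The root node n_τ of Φ(τ). -/
def PhiRoot : Node := 0

/-- Heap update h[(l,f) ↦ v]. -/
def hupd (h : Heap) (l : Loc) (f : Field) (v : Val) : Heap :=
  fun l' => if l' = l then (h l).map (fun o => Function.update o f v) else h l'

/-- Graph update Δ[(n,f) ↦ t]. -/
def gupd (Δ : Graph) (n : Node) (f : Field) (t : BaseType) : Graph :=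
  fun m => if m = n then (Δ n).map (fun e => Function.update e f t) else Δ m


/-- Subject reduction for null assignment x := null. -/
theorem subject_reduction_null_assign
    (ρ : Env) (h : Heap) (A : Set Loc) (Γ : Var → BaseType) (Δ : Graph) (Θ : Set Node)
    (x : Var) (hint : Interp ρ h A ⟨Γ, Δ, Θ⟩) :
    Interp (Function.update ρ x Val.null) h A ⟨Function.update Γ x BaseType.bot, Δ, Θ⟩ := by
  have hbot : ∀ (fs : List Field) (t : BaseType),
      aevalFields Δ BaseType.bot fs = some t → fs = [] ∧ t = BaseType.bot := by
    intro fs t hfs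
    cases fs with
    | nil => simp [aevalFields] at hfs; exact ⟨rfl, hfs.symm⟩
    | cons f fs => simp [aevalFields] at hfs
  have hnull : ∀ (fs : List Field) (v : Val),
      evalFields h Val.null fs = some v → fs = [] ∧ v = Val.null := by
    intro fs v hfs
    cases fs with
    | nil => simp [evalFields] at hfs; exact ⟨rfl, hfs.symm⟩
    | cons f fs => simp [evalFields] at hfs
  constructor
  · intro π t v hA hE
    by_cases hr : π.root = x
    · have hA' : aevalFields Δ BaseType.bot π.fields = some t := by
        simpa [AEval, hr, Function.update] using hA
      have hE' : evalFields h Val.null π.fields = some v := by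
        simpa [EvalPath, hr, Function.update] using hE
      obtain ⟨_, rfl⟩ := hnull _ _ hE'
      exact AuxInterp.null t
    · have hA' : AEval Γ Δ π t := by
        simpa [AEval, Function.update_of_ne hr] using hA
      have hE' : EvalPath ρ h π v := by
        simpa [EvalPath, Function.update_of_ne hr] using hE
      have := hint.paths π t v hA' hE'
      cases this with
      | null t => exact AuxInterp.null t
      | top v => exact AuxInterp.top v
      | topOut l hl => exact AuxInterp.topOut l hl
      | node l n hlA hΔ hall =>
        refine AuxInterp.node l n hlA hΔ ?_
        intro π' hE''
        by_cases hr' : π'.root = x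
        · exfalso
          have : evalFields h Val.null π'.fields = some (Val.loc l) := by
            simpa [EvalPath, hr', Function.update, hr'] using hE''
          obtain ⟨_, hv⟩ := hnull _ _ this
          exact Val.noConfusion hv
        · have hE3 : EvalPath ρ h π' (Val.loc l) := by
            simpa [EvalPath, Function.update_of_ne hr'] using hE''
          have := hall π' hE3
          simpa [AEval, Function.update_of_ne hr'] using this
  · intro n hn π π' l l' hA1 hA2 hE1 hE2
    have hroot : ∀ (σ : Path), AEval (Function.update Γ x BaseType.bot) Δ σ (BaseType.node n)
        → σ.root ≠ x := by
      intro σ hAσ hrσ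
      have : aevalFields Δ BaseType.bot σ.fields = some (BaseType.node n) := by
        simpa [AEval, hrσ, Function.update, hrσ] using hAσ
      obtain ⟨_, ht⟩ := hbot _ _ this
      exact BaseType.noConfusion ht
    have hr1 := hroot π hA1
    have hr2 := hroot π' hA2
    exact hint.strong n hn π π' l l'
      (by simpa [AEval, Function.update_of_ne hr1] using hA1)
      (by simpa [AEval, Function.update_of_ne hr2] using hA2)
      (by simpa [EvalPath, Function.update_of_ne hr1] using hE1)
      (by simpa [EvalPath, Function.update_of_ne hr2] using hE2)

end SecureClones
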